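/- Let $G$ be a finite simple graph on vertex set $V$ and let $G'$ be obtained from $G$ by attaching a whisker (a new pendant vertex joined by a single edge) to every vertex of $G$. Then every maximal independent set of $G'$ has cardinality $|V|$; in particular $G'$ is well-covered (unmixed). -/

import Mathlib

/-- An independent set of a graph: a set of vertices no two of which are adjacent. -/
def IsIndepSet {V : Type*} (G : SimpleGraph V) (A : Finset V) : Prop :=
  ∀ u ∈ A, ∀ v ∈ A, ¬ G.Adj u v

/-- A maximal independent set: an independent set not properly contained in another
independent set. -/
def IsMaxIndepSet {V : Type*} (G : SimpleGraph V) (A : Finset V) : Prop :=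
  IsIndepSet G A ∧ ∀ B : Finset V, IsIndepSet G B → A ⊆ B → B = A

/-- The graph obtained from `G` by attaching a whisker (a new pendant vertex `Sum.inr v`
joined by a single edge) to every vertex `Sum.inl v` of `G`. -/
def addWhiskers {V : Type*} (G : SimpleGraph V) : SimpleGraph (V ⊕ V) :=
  SimpleGraph.fromRel (fun a b =>
    (∃ u w, a = Sum.inl u ∧ b = Sum.inl w ∧ G.Adj u w) ∨
    (∃ v, a = Sum.inl v ∧ b = Sum.inr v))

/-- If `G'` is obtained from a finite simple graph `G` by attaching a whisker to every
vertex, then every maximal independent set of `G'` has cardinality `|V|`; in particular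
`G'` is well-covered (unmixed). -/
theorem stmt6 {V : Type*} [Fintype V] [DecidableEq V] (G : SimpleGraph V)
    (A : Finset (V ⊕ V)) (hA : IsMaxIndepSet (addWhiskers G) A) :
    A.card = Fintype.card V := by
  obtain ⟨hind, hmax⟩ := hA
  have adj_inr : ∀ {a : V ⊕ V} {v : V}, (addWhiskers G).Adj a (Sum.inr v) → a = Sum.inl v := by
    rintro a v ⟨hne, (⟨u, w, h1, h2, h3⟩ | ⟨u, h1, h2⟩) | (⟨u, w, h1, h2, h3⟩ | ⟨u, h1, h2⟩)⟩ <;>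
      simp_all
  have adj_lr : ∀ v : V, (addWhiskers G).Adj (Sum.inl v) (Sum.inr v) := by
    intro v
    exact ⟨by simp, Or.inl (Or.inr ⟨v, rfl, rfl⟩)⟩
  have key : ∀ v : V, Sum.inl v ∈ A ∨ Sum.inr v ∈ A := by
    intro v
    by_contra h
    push_neg at h
    obtain ⟨h1, h2⟩ := h
    have hB : IsIndepSet (addWhiskers G) (insert (Sum.inr v) A) := by
      intro u hu w hw
      simp only [Finset.mem_insert] at hu hw
      rcases hu with rfl | hu <;> rcases hw with rfl | hw
      · intro h; exact (addWhiskers G).loopless.irrefl _ h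
      · intro h; exact h1 (adj_inr h.symm ▸ hw)
      · intro h; exact h1 (adj_inr h ▸ hu)
      · exact hind u hu w hw
    have := hmax _ hB (Finset.subset_insert _ _)
    exact h2 (this ▸ Finset.mem_insert_self _ _)
  rw [← Finset.card_univ]
  apply Finset.card_bij (fun a _ => Sum.elim id id a)
  · intros; exact Finset.mem_univ _
  · intro a ha b hb hab
    rcases a with a | a <;> rcases b with b | b <;> simp only [Sum.elim_inl, Sum.elim_inr, id] at hab <;> subst hab
    · rfl
    · exact absurd (adj_lr a) (hind _ ha _ hb)
    · exact absurd (adj_lr a) (hind _ hb _ ha)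
    · rfl
  · intro v _
    rcases key v with h | h
    · exact ⟨Sum.inl v, h, rfl⟩
    · exact ⟨Sum.inr v, h, rfl⟩
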